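/- Let A be an associative ℂ-algebra containing elements E_0, E_1, …, E_{n-1} satisfying the type D Temperley–Lieb relations. Then for every integer i with 2 ≤ i ≤ n-1, one has E_0E_1E_{i,0} = E_0E_1E_{i,3} (where E_{2,3} = 1 by convention). -/
import Mathlib


/-- `descProd E i j = E i * E (i-1) * ⋯ * E j` (empty product `1` when `j = i + 1`). -/
def descProd {A : Type*} [Monoid A] (E : ℕ → A) (i j : ℕ) : A :=
  ((List.range (i + 1 - j)).map (fun k => E (i - k))).prod

/-- `ascProd E i j = E i * E (i+1) * ⋯ * E j` (empty product `1` when `j = i - 1`). -/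
def ascProd {A : Type*} [Monoid A] (E : ℕ → A) (i j : ℕ) : A :=
  ((List.range (j + 1 - i)).map (fun k => E (i + k))).prod

/-- Type D convention: `E_{i,0} = E i * E (i-1) * ⋯ * E 3 * E 2 * E 0` for `i ≥ 2`,
and `E_{1,0} = E 0`. -/
def descProdD {A : Type*} [Monoid A] (E : ℕ → A) (i : ℕ) : A :=
  descProd E i 2 * E 0

lemma descProd_split {A : Type*} [Monoid A] (E : ℕ → A) {i j : ℕ} (h : j ≤ i) :
    descProd E i j = descProd E i (j + 1) * E j := by
  unfold descProd
  have h1 : i + 1 - j = (i - j) + 1 := by omega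
  have h2 : i + 1 - (j + 1) = i - j := by omega
  rw [h1, h2, List.range_succ, List.map_append, List.prod_append]
  simp only [List.map_cons, List.map_nil, List.prod_cons, List.prod_nil, mul_one]
  congr 2
  omega

lemma commute_descProd {A : Type*} [Monoid A] (E : ℕ → A) (x : A) (i j : ℕ)
    (h : ∀ k, j ≤ k → k ≤ i → Commute x (E k)) : Commute x (descProd E i j) := by
  apply Commute.list_prod_right
  intro y hy
  obtain ⟨k, hk, rfl⟩ := List.mem_map.mp hy
  rw [List.mem_range] at hk
  exact h _ (by omega) (by omega)

/-- Type D Temperley–Lieb relation: `E_0 E_1 E_{i,0} = E_0 E_1 E_{i,3}` for `2 ≤ i ≤ n - 1`. -/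
theorem typeD_lemma_c (n : ℕ) (hn : 4 ≤ n) (δ : ℂ) (A : Type*) [Ring A] [Algebra ℂ A]
    (E : ℕ → A)
    (hsq : ∀ i, i ≤ n - 1 → E i * E i = δ • E i)
    (hcomm : ∀ i j, 1 ≤ j → j + 1 < i → i ≤ n - 1 → E i * E j = E j * E i)
    (hcomm0 : ∀ i, i ≤ n - 1 → i ≠ 2 → E i * E 0 = E 0 * E i)
    (hup : ∀ i, 1 ≤ i → i + 1 ≤ n - 1 → E i * E (i + 1) * E i = E i)
    (hdown : ∀ i, 2 ≤ i → i ≤ n - 1 → E i * E (i - 1) * E i = E i)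
    (h020 : E 0 * E 2 * E 0 = E 0)
    (h202 : E 2 * E 0 * E 2 = E 2) :
    ∀ i, 2 ≤ i → i ≤ n - 1 →
      E 0 * E 1 * descProdD E i = E 0 * E 1 * descProd E i 3 := by
  intro i hi2 hin
  set D := descProd E i 3 with hD
  have h1D : Commute (E 1) D := by
    apply commute_descProd
    intro k hk3 hki
    exact (hcomm k 1 le_rfl (by omega) (by omega)).symm
  have h0D : Commute (E 0) D := by
    apply commute_descProd
    intro k hk3 hki
    exact (hcomm0 k (by omega) (by omega)).symm
  have h01 : Commute (E 0) (E 1) := (hcomm0 1 (by omega) (by omega)).symm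
  rw [descProdD, descProd_split E (show 2 ≤ i from hi2), ← hD]
  simp only [mul_assoc]
  rw [h1D.left_comm, h0D.left_comm, h1D.eq, h0D.left_comm]
  congr 1
  rw [h01.left_comm, ← mul_assoc (E 0) (E 2), h020, h01.eq]
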